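/- Let τ > 0, let s₀ = σ₀ + iθ₀ with σ₀, θ₀ ∈ ℝ and θ₀ ≠ 0, and let a₁, a₀, α₁, α₀ ∈ ℝ. Then s₀ and its complex conjugate are both roots of multiplicity exactly 2 of Δ (i.e., Δ and Δ' vanish at s₀ and at conj(s₀), while Δ'' does not) if and only if, setting D = τ²θ₀² − sin²(τθ₀), one has a₁ = −2σ₀ − 2θ₀(τθ₀ − sin(τθ₀)cos(τθ₀))/D, a₀ = σ₀² + 2σ₀θ₀(τθ₀ − sin(τθ₀)cos(τθ₀))/D + θ₀²(τ²θ₀² + sin²(τθ₀))/D, α₁ = 2θ₀e^{σ₀τ}(τθ₀cos(τθ₀) − sin(τθ₀))/D, and α₀ = 2θ₀e^{σ₀τ}(σ₀(sin(τθ₀) − τθ₀cos(τθ₀)) − τθ₀²sin(τθ₀))/D. -/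

import Mathlib

open Complex ComplexConjugate

lemma quasi_sin_sq_lt_sq (x : ℝ) (hx : x ≠ 0) : Real.sin x ^ 2 < x ^ 2 := by
  have key : ∀ y : ℝ, 0 < y → Real.sin y ^ 2 < y ^ 2 := by
    intro y hy
    rcases le_or_gt y 1 with h | h
    · have h1 : Real.sin y < y := Real.sin_lt hy
      have h2 : 0 < Real.sin y := Real.sin_pos_of_pos_of_lt_pi hy (by nlinarith [Real.pi_gt_three])
      nlinarith
    · nlinarith [Real.neg_one_le_sin y, Real.sin_le_one y]
  rcases hx.lt_or_gt with h | h
  · have := key (-x) (by linarith)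
    rw [Real.sin_neg] at this; nlinarith
  · exact key x h

lemma quasi_second_ne (τ θ₀ K M1 M2 c s : ℝ) (hτ : 0 < τ) (hθ₀ : θ₀ ≠ 0)
    (hpy : s^2 + c^2 = 1) (hK : 0 < K)
    (h1 : K*(M1*(τ^2*θ₀^2 - s^2)) = -2*K*(τ*θ₀*c - s)^2)
    (h2 : K*(M2*(τ^2*θ₀^2 - s^2)) = 2*K*(τ*θ₀)*((τ*θ₀)^2 + τ*θ₀*s*c - 2*s^2)) :
    ¬(M1 = 0 ∧ M2 = 0) := by
  rintro ⟨e1, e2⟩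
  rw [e1] at h1; rw [e2] at h2
  have hφ : τ * θ₀ ≠ 0 := mul_ne_zero hτ.ne' hθ₀
  have hsq : (τ*θ₀*c - s)^2 = 0 := by nlinarith [sq_nonneg (τ*θ₀*c - s)]
  have hcs : τ*θ₀*c = s := by
    have := pow_eq_zero_iff (n := 2) (by norm_num) |>.mp hsq
    linarith [sub_eq_zero.mp this]
  have h0 : 2*K*(τ*θ₀) * ((τ*θ₀)^2 + τ*θ₀*s*c - 2*s^2) = 0 := by linear_combination -h2
  have h2' : (τ*θ₀)^2 + τ*θ₀*s*c - 2*s^2 = 0 :=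
    (mul_eq_zero.mp h0).resolve_left (mul_ne_zero (by positivity) hφ)
  rw [← hcs] at h2' hpy
  have hc2 : c^2 = 1 := by nlinarith [sq_nonneg c, sq_nonneg (τ*θ₀), mul_pos hτ hτ]
  have h6 : (τ*θ₀)^2 * c^2 = 0 := by linear_combination hpy - hc2
  have h5 : (τ*θ₀)^2 = 0 := by linear_combination h6 - (τ*θ₀)^2*hc2
  exact hφ (by nlinarith [h5])

lemma quasi_key_real (τ σ₀ θ₀ a₁ a₀ α₁ α₀ K E c s : ℝ)
    (hpy : s^2 + c^2 = 1) (hEK : E * K = 1)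
    (hD0 : τ^2*θ₀^2 - s^2 ≠ 0) (hK0 : K ≠ 0) :
    ((σ₀^2 - θ₀^2 + a₁*σ₀ + a₀ + E*(c*(α₁*σ₀+α₀) + s*(α₁*θ₀)) = 0)
    ∧ (2*σ₀*θ₀ + a₁*θ₀ + E*(c*(α₁*θ₀) - s*(α₁*σ₀+α₀)) = 0)
    ∧ (2*σ₀ + a₁ + E*(c*(α₁ - τ*(α₁*σ₀+α₀)) - s*(τ*α₁*θ₀)) = 0)
    ∧ (2*θ₀ + E*(-(c*(τ*α₁*θ₀)) - s*(α₁ - τ*(α₁*σ₀+α₀))) = 0)) ↔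
    (a₁*(τ^2*θ₀^2 - s^2) = -2*σ₀*(τ^2*θ₀^2 - s^2) - 2*θ₀*(τ*θ₀ - s*c)
    ∧ a₀*(τ^2*θ₀^2 - s^2) = σ₀^2*(τ^2*θ₀^2 - s^2) + 2*σ₀*θ₀*(τ*θ₀ - s*c) + θ₀^2*(τ^2*θ₀^2 + s^2)
    ∧ α₁*(τ^2*θ₀^2 - s^2) = 2*θ₀*K*(τ*θ₀*c - s)
    ∧ α₀*(τ^2*θ₀^2 - s^2) = 2*θ₀*K*(σ₀*(s - τ*θ₀*c) - τ*θ₀^2*s)) := by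
  constructor
  · rintro ⟨h1, h2, h3, h4⟩
    have hb1 : α₁*(τ^2*θ₀^2 - s^2) = 2*θ₀*K*(τ*θ₀*c - s) := by
      linear_combination (s*τ*K)*h2 + (-(s*τ*θ₀*K))*h3 + (-((c*τ*θ₀ - s)*K))*h4
        + ((-1)*θ₀^2*τ^2*α₁)*hpy
        + (s^2*α₁ + (-1)*θ₀^2*τ^2*c^2*α₁ + (-1)*θ₀^2*τ^2*s^2*α₁)*hEK
    have hb0 : α₀*(τ^2*θ₀^2 - s^2) = 2*θ₀*K*(σ₀*(s - τ*θ₀*c) - τ*θ₀^2*s) := by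
      linear_combination (-(((-1)*s + (-1)*θ₀*τ*c + σ₀*τ*s)*K))*h2
        + ((((-1)*s + (-1)*θ₀*τ*c + σ₀*τ*s)*θ₀)*K)*h3
        + ((θ₀^2*τ*s + (-1)*σ₀*s + σ₀*θ₀*τ*c)*K)*h4
        + ((-1)*θ₀^2*τ^2*α₀)*hpy
        + (s^2*α₀ + (-1)*θ₀^2*τ^2*c^2*α₀ + (-1)*θ₀^2*τ^2*s^2*α₀)*hEK
    have ha1K : K*(a₁*(τ^2*θ₀^2 - s^2)) = K*(-2*σ₀*(τ^2*θ₀^2 - s^2) - 2*θ₀*(τ*θ₀ - s*c)) := by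
      linear_combination ((τ^2*θ₀^2 - s^2)*K)*h3 + (-(c + (-1)*θ₀*τ*s + (-1)*σ₀*τ*c))*hb1
        + (c*τ)*hb0 + ((-2)*θ₀^2*τ*K)*hpy
        + (s^2*c*α₁ + (-1)*τ*s^2*c*α₀ + (-1)*θ₀*τ*s^3*α₁ + (-1)*θ₀^2*τ^2*c*α₁
           + θ₀^2*τ^3*c*α₀ + θ₀^3*τ^3*s*α₁ + (-1)*σ₀*τ*s^2*c*α₁ + σ₀*θ₀^2*τ^3*c*α₁)*hEK
    have ha1 := mul_left_cancel₀ hK0 ha1K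
    have ha0K : K*(a₀*(τ^2*θ₀^2 - s^2)) =
        K*(σ₀^2*(τ^2*θ₀^2 - s^2) + 2*σ₀*θ₀*(τ*θ₀ - s*c) + θ₀^2*(τ^2*θ₀^2 + s^2)) := by
      linear_combination ((τ^2*θ₀^2 - s^2)*K)*h1 + (-(σ₀*K))*ha1 + (-(c*σ₀ + s*θ₀))*hb1
        + (-c)*hb0
        + (s^2*c*α₀ + θ₀*s^3*α₁ + (-1)*θ₀^2*τ^2*c*α₀ + (-1)*θ₀^3*τ^2*s*α₁
           + σ₀*s^2*c*α₁ + (-1)*σ₀*θ₀^2*τ^2*c*α₁)*hEK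
    exact ⟨ha1, mul_left_cancel₀ hK0 ha0K, hb1, hb0⟩
  · rintro ⟨ha1, ha0, hb1, hb0⟩
    have h1 : (τ^2*θ₀^2 - s^2) *
        (σ₀^2 - θ₀^2 + a₁*σ₀ + a₀ + E*(c*(α₁*σ₀+α₀) + s*(α₁*θ₀))) = 0 := by
      linear_combination σ₀*ha1 + ha0 + (E*(c*σ₀ + s*θ₀))*hb1 + (E*c)*hb0
        + ((-2)*θ₀^2*s^2)*hEK
    have h2 : (τ^2*θ₀^2 - s^2) *
        (2*σ₀*θ₀ + a₁*θ₀ + E*(c*(α₁*θ₀) - s*(α₁*σ₀+α₀))) = 0 := by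
      linear_combination θ₀*ha1 + (E*(c*θ₀ - s*σ₀))*hb1 + (-(E*s))*hb0
        + ((2)*θ₀^3*τ)*hpy
        + ((-2)*θ₀^2*s*c + (2)*θ₀^3*τ*c^2 + (2)*θ₀^3*τ*s^2)*hEK
    have h3 : (τ^2*θ₀^2 - s^2) *
        (2*σ₀ + a₁ + E*(c*(α₁ - τ*(α₁*σ₀+α₀)) - s*(τ*α₁*θ₀))) = 0 := by
      linear_combination ha1 + (E*(c + (-1)*θ₀*τ*s + (-1)*σ₀*τ*c))*hb1 + (-(E*(c*τ)))*hb0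
        + ((2)*θ₀^2*τ)*hpy
        + ((-2)*θ₀*s*c + (2)*θ₀^2*τ*c^2 + (2)*θ₀^2*τ*s^2)*hEK
    have h4 : (τ^2*θ₀^2 - s^2) *
        (2*θ₀ + E*(-(c*(τ*α₁*θ₀)) - s*(α₁ - τ*(α₁*σ₀+α₀)))) = 0 := by
      linear_combination (E*((-1)*s + (-1)*θ₀*τ*c + σ₀*τ*s))*hb1 + (E*(s*τ))*hb0
        + ((-2)*θ₀^3*τ^2)*hpy
        + ((2)*θ₀*s^2 + (-2)*θ₀^3*τ^2*c^2 + (-2)*θ₀^3*τ^2*s^2)*hEK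
    exact ⟨(mul_eq_zero.mp h1).resolve_left hD0, (mul_eq_zero.mp h2).resolve_left hD0,
           (mul_eq_zero.mp h3).resolve_left hD0, (mul_eq_zero.mp h4).resolve_left hD0⟩

lemma quasi_hasDeriv1 (a₁ a₀ α₁ α₀ τ : ℝ) (z : ℂ) :
    HasDerivAt (fun w : ℂ => w^2 + a₁*w + a₀ + Complex.exp (-w*τ) * (α₁*w + α₀))
      (2*z + a₁ + Complex.exp (-z*τ) * ((α₁:ℂ) - τ*(α₁*z + α₀))) z := by
  have h1 : HasDerivAt (fun w : ℂ => -w*(τ:ℂ)) (-τ) z := by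
    simpa using ((hasDerivAt_id z).neg.mul_const (τ:ℂ))
  have h2 := h1.cexp
  have h3 : HasDerivAt (fun w : ℂ => (α₁:ℂ)*w + α₀) α₁ z := by
    simpa using ((hasDerivAt_id z).const_mul (α₁:ℂ)).add_const (α₀:ℂ)
  have h4 := h2.mul h3
  have h5 : HasDerivAt (fun w : ℂ => w^2 + (a₁:ℂ)*w + (a₀:ℂ)) (2*z + a₁) z := by
    have := ((hasDerivAt_pow 2 z).add ((hasDerivAt_id z).const_mul (a₁:ℂ))).add_const (a₀:ℂ)
    exact this.congr_deriv (by push_cast; ring)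
  exact (h5.add h4).congr_deriv (by ring)

lemma quasi_hasDeriv2 (a₁ a₀ α₁ α₀ τ : ℝ) (z : ℂ) :
    HasDerivAt (fun w : ℂ => 2*w + a₁ + Complex.exp (-w*τ) * ((α₁:ℂ) - τ*(α₁*w + α₀)))
      ((2:ℂ) + Complex.exp (-z*τ) * ((τ:ℂ)^2*(α₁*z + α₀) - 2*τ*α₁)) z := by
  have h1 : HasDerivAt (fun w : ℂ => -w*(τ:ℂ)) (-τ) z := by
    simpa using ((hasDerivAt_id z).neg.mul_const (τ:ℂ))
  have h2 := h1.cexp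
  have h3 : HasDerivAt (fun w : ℂ => (α₁:ℂ) - (τ:ℂ)*(α₁*w + α₀)) (-(τ*α₁)) z := by
    have := (((hasDerivAt_id z).const_mul (α₁:ℂ)).add_const (α₀:ℂ)).const_mul (τ:ℂ)
    simpa using (this.const_sub (α₁:ℂ))
  have h4 := h2.mul h3
  have h5 : HasDerivAt (fun w : ℂ => 2*w + (a₁:ℂ)) 2 z := by
    simpa using ((hasDerivAt_id z).const_mul (2:ℂ)).add_const (a₁:ℂ)
  exact (h5.add h4).congr_deriv (by ring)

lemma quasi_conj_exp (τ : ℝ) (z : ℂ) :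
    Complex.exp (-(conj z)*τ) = conj (Complex.exp (-z*τ)) := by
  rw [← Complex.exp_conj]; congr 1
  rw [map_mul, map_neg, Complex.conj_ofReal]

lemma quasi_exp_val (τ σ₀ θ₀ : ℝ) :
    Complex.exp (-((σ₀:ℂ) + θ₀*Complex.I)*τ)
      = (Real.exp (-(σ₀*τ)) : ℂ) * ((Real.cos (τ*θ₀) : ℂ) - (Real.sin (τ*θ₀) : ℂ)*Complex.I) := by
  have h : -((σ₀:ℂ) + θ₀*Complex.I)*τ = ((-(σ₀*τ) : ℝ) : ℂ) + ((-(τ*θ₀) : ℝ) : ℂ)*Complex.I := by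
    push_cast; ring
  rw [h, Complex.exp_add, Complex.exp_mul_I, ← Complex.ofReal_exp,
    ← Complex.ofReal_cos, ← Complex.ofReal_sin, Real.cos_neg, Real.sin_neg]
  push_cast; ring

lemma quasi_mk_zero (x y : ℝ) : (x:ℂ) + (y:ℂ)*Complex.I = 0 ↔ x = 0 ∧ y = 0 := by
  constructor
  · intro h
    constructor
    · simpa using congrArg Complex.re h
    · simpa using congrArg Complex.im h
  · rintro ⟨hx, hy⟩; rw [hx, hy]; simp

/-- For the quasipolynomial Δ(s) = s² + a₁s + a₀ + e^{−sτ}(α₁s + α₀) with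
τ > 0 and s₀ = σ₀ + iθ₀ with θ₀ ≠ 0, s₀ and its conjugate are roots of multiplicity
exactly 2 of Δ if and only if the coefficients are given by the stated formulas. -/
theorem complex_pair_multiplicity_two_iff
    (τ σ₀ θ₀ a₁ a₀ α₁ α₀ D : ℝ) (hτ : 0 < τ) (hθ₀ : θ₀ ≠ 0)
    (s₀ : ℂ) (hs₀ : s₀ = σ₀ + θ₀ * Complex.I)
    (hD : D = τ ^ 2 * θ₀ ^ 2 - Real.sin (τ * θ₀) ^ 2)
    (Δ : ℂ → ℂ)
    (hΔ : ∀ s : ℂ, Δ s = s ^ 2 + a₁ * s + a₀ + Complex.exp (-s * τ) * (α₁ * s + α₀)) :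
    (Δ s₀ = 0 ∧ deriv Δ s₀ = 0 ∧ iteratedDeriv 2 Δ s₀ ≠ 0 ∧
     Δ (conj s₀) = 0 ∧ deriv Δ (conj s₀) = 0 ∧ iteratedDeriv 2 Δ (conj s₀) ≠ 0)
    ↔ (a₁ = -2 * σ₀ - 2 * θ₀ * (τ * θ₀ - Real.sin (τ * θ₀) * Real.cos (τ * θ₀)) / D ∧
       a₀ = σ₀ ^ 2 + 2 * σ₀ * θ₀ * (τ * θ₀ - Real.sin (τ * θ₀) * Real.cos (τ * θ₀)) / D
            + θ₀ ^ 2 * (τ ^ 2 * θ₀ ^ 2 + Real.sin (τ * θ₀) ^ 2) / D ∧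
       α₁ = 2 * θ₀ * Real.exp (σ₀ * τ) * (τ * θ₀ * Real.cos (τ * θ₀) - Real.sin (τ * θ₀)) / D ∧
       α₀ = 2 * θ₀ * Real.exp (σ₀ * τ) *
              (σ₀ * (Real.sin (τ * θ₀) - τ * θ₀ * Real.cos (τ * θ₀))
                - τ * θ₀ ^ 2 * Real.sin (τ * θ₀)) / D) := by
  subst hs₀
  set c := Real.cos (τ*θ₀) with hcdef
  set s := Real.sin (τ*θ₀) with hsdef
  set K := Real.exp (σ₀*τ) with hKdef
  set E := Real.exp (-(σ₀*τ)) with hEdef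
  have hπ : τ * θ₀ ≠ 0 := mul_ne_zero hτ.ne' hθ₀
  have hsin2 : s^2 < τ^2*θ₀^2 := by
    have := quasi_sin_sq_lt_sq (τ*θ₀) hπ
    nlinarith [this]
  have hDpos : 0 < τ^2*θ₀^2 - s^2 := by linarith
  have hD0' : τ^2*θ₀^2 - s^2 ≠ 0 := hDpos.ne'
  have hDD : D = τ^2*θ₀^2 - s^2 := hD
  have hD0 : D ≠ 0 := by rw [hDD]; exact hD0'
  have hKpos : 0 < K := Real.exp_pos _
  have hK0 : K ≠ 0 := hKpos.ne'
  have hEK : E * K = 1 := by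
    rw [hEdef, hKdef, ← Real.exp_add]; norm_num
  have hpy : s^2 + c^2 = 1 := by rw [hsdef, hcdef]; exact Real.sin_sq_add_cos_sq _
  have hΔfun : Δ = fun w : ℂ => w^2 + a₁*w + a₀ + Complex.exp (-w*τ) * (α₁*w + α₀) := by
    funext w; rw [hΔ w]
  have hd1 : ∀ z : ℂ, deriv Δ z = 2*z + a₁ + Complex.exp (-z*τ) * ((α₁:ℂ) - τ*(α₁*z + α₀)) := by
    intro z; rw [hΔfun]; exact (quasi_hasDeriv1 a₁ a₀ α₁ α₀ τ z).deriv
  have hd2 : ∀ z : ℂ, iteratedDeriv 2 Δ z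
      = (2:ℂ) + Complex.exp (-z*τ) * ((τ:ℂ)^2*(α₁*z + α₀) - 2*τ*α₁) := by
    intro z
    have e1 : iteratedDeriv 2 Δ = deriv (deriv Δ) := by
      rw [iteratedDeriv_succ, iteratedDeriv_one]
    have e2 : deriv Δ = fun z : ℂ => 2*z + a₁ + Complex.exp (-z*τ) * ((α₁:ℂ) - τ*(α₁*z + α₀)) :=
      funext hd1
    rw [e1, e2]
    exact (quasi_hasDeriv2 a₁ a₀ α₁ α₀ τ z).deriv
  -- conjugation symmetry
  have hfc : Δ (conj ((σ₀:ℂ) + θ₀*Complex.I)) = conj (Δ ((σ₀:ℂ) + θ₀*Complex.I)) := by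
    rw [hΔ, hΔ]
    simp only [map_add, map_mul, map_pow, Complex.conj_ofReal, ← quasi_conj_exp]
  have hf1c : deriv Δ (conj ((σ₀:ℂ) + θ₀*Complex.I))
      = conj (deriv Δ ((σ₀:ℂ) + θ₀*Complex.I)) := by
    rw [hd1, hd1]
    simp only [map_add, map_mul, map_sub, Complex.conj_ofReal, ← quasi_conj_exp, map_ofNat]
  have hf2c : iteratedDeriv 2 Δ (conj ((σ₀:ℂ) + θ₀*Complex.I))
      = conj (iteratedDeriv 2 Δ ((σ₀:ℂ) + θ₀*Complex.I)) := by
    rw [hd2, hd2]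
    simp only [map_add, map_mul, map_sub, map_pow, Complex.conj_ofReal, ← quasi_conj_exp,
      map_ofNat]
  -- bridges to real and imaginary parts
  have hb0 : Δ ((σ₀:ℂ) + θ₀*Complex.I)
      = ((σ₀^2 - θ₀^2 + a₁*σ₀ + a₀ + E*(c*(α₁*σ₀+α₀) + s*(α₁*θ₀)) : ℝ) : ℂ)
        + ((2*σ₀*θ₀ + a₁*θ₀ + E*(c*(α₁*θ₀) - s*(α₁*σ₀+α₀)) : ℝ) : ℂ) * Complex.I := by
    rw [hΔ, quasi_exp_val, ← hEdef, ← hcdef, ← hsdef]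
    apply Complex.ext <;>
      simp [Complex.add_re, Complex.add_im, Complex.mul_re, Complex.mul_im, pow_two] <;> ring
  have hb1 : deriv Δ ((σ₀:ℂ) + θ₀*Complex.I)
      = ((2*σ₀ + a₁ + E*(c*(α₁ - τ*(α₁*σ₀+α₀)) - s*(τ*α₁*θ₀)) : ℝ) : ℂ)
        + ((2*θ₀ + E*(-(c*(τ*α₁*θ₀)) - s*(α₁ - τ*(α₁*σ₀+α₀))) : ℝ) : ℂ) * Complex.I := by
    rw [hd1, quasi_exp_val, ← hEdef, ← hcdef, ← hsdef]
    apply Complex.ext <;>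
      simp [Complex.add_re, Complex.add_im, Complex.mul_re, Complex.mul_im, pow_two] <;> ring
  have hb2 : iteratedDeriv 2 Δ ((σ₀:ℂ) + θ₀*Complex.I)
      = ((2 + E*(c*(τ^2*(α₁*σ₀+α₀) - 2*τ*α₁) + s*(τ^2*α₁*θ₀)) : ℝ) : ℂ)
        + ((E*(c*(τ^2*α₁*θ₀) - s*(τ^2*(α₁*σ₀+α₀) - 2*τ*α₁)) : ℝ) : ℂ) * Complex.I := by
    rw [hd2, quasi_exp_val, ← hEdef, ← hcdef, ← hsdef]
    apply Complex.ext <;>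
      simp [Complex.add_re, Complex.add_im, Complex.mul_re, Complex.mul_im, pow_two] <;> ring
  constructor
  · rintro ⟨h1, h2, -, -, -, -⟩
    rw [hb0, quasi_mk_zero] at h1
    rw [hb1, quasi_mk_zero] at h2
    obtain ⟨ha1, ha0, hA1, hA0⟩ :=
      (quasi_key_real τ σ₀ θ₀ a₁ a₀ α₁ α₀ K E c s hpy hEK hD0' hK0).mp
        ⟨h1.1, h1.2, h2.1, h2.2⟩
    refine ⟨?_, ?_, ?_, ?_⟩
    · field_simp; rw [hDD]; linear_combination ha1
    · field_simp; rw [hDD]; linear_combination ha0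
    · field_simp; rw [hDD]; linear_combination hA1
    · field_simp; rw [hDD]; linear_combination hA0
  · rintro ⟨hfa1, hfa0, hfb1, hfb0⟩
    rw [hDD] at hfa1 hfa0 hfb1 hfb0
    have ha1 : a₁*(τ^2*θ₀^2 - s^2) = -2*σ₀*(τ^2*θ₀^2 - s^2) - 2*θ₀*(τ*θ₀ - s*c) := by
      rw [hfa1, ← hDD]; field_simp
    have ha0 : a₀*(τ^2*θ₀^2 - s^2)
        = σ₀^2*(τ^2*θ₀^2 - s^2) + 2*σ₀*θ₀*(τ*θ₀ - s*c) + θ₀^2*(τ^2*θ₀^2 + s^2) := by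
      rw [hfa0, ← hDD]; field_simp
    have hA1 : α₁*(τ^2*θ₀^2 - s^2) = 2*θ₀*K*(τ*θ₀*c - s) := by
      rw [hfb1, ← hDD]; field_simp
    have hA0 : α₀*(τ^2*θ₀^2 - s^2) = 2*θ₀*K*(σ₀*(s - τ*θ₀*c) - τ*θ₀^2*s) := by
      rw [hfb0, ← hDD]; field_simp
    obtain ⟨e1, e2, e3, e4⟩ :=
      (quasi_key_real τ σ₀ θ₀ a₁ a₀ α₁ α₀ K E c s hpy hEK hD0' hK0).mpr ⟨ha1, ha0, hA1, hA0⟩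
    have hz0 : Δ ((σ₀:ℂ) + θ₀*Complex.I) = 0 := by
      rw [hb0, quasi_mk_zero]; exact ⟨e1, e2⟩
    have hz1 : deriv Δ ((σ₀:ℂ) + θ₀*Complex.I) = 0 := by
      rw [hb1, quasi_mk_zero]; exact ⟨e3, e4⟩
    have hM1 : K*((2 + E*(c*(τ^2*(α₁*σ₀+α₀) - 2*τ*α₁) + s*(τ^2*α₁*θ₀)))*(τ^2*θ₀^2 - s^2))
        = -2*K*(τ*θ₀*c - s)^2 := by
      linear_combination ((-2)*τ*c*K*E + θ₀*τ^2*s*K*E + σ₀*τ^2*c*K*E)*hA1 + (τ^2*c*K*E)*hA0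
        + ((-2)*θ₀^2*τ^2*K)*hpy
        + ((4)*θ₀*τ*s*c*K + (-4)*θ₀^2*τ^2*c^2*K + (-2)*θ₀^2*τ^2*s^2*K)*hEK
    have hM2 : K*((E*(c*(τ^2*α₁*θ₀) - s*(τ^2*(α₁*σ₀+α₀) - 2*τ*α₁)))*(τ^2*θ₀^2 - s^2))
        = 2*K*(τ*θ₀)*((τ*θ₀)^2 + τ*θ₀*s*c - 2*s^2) := by
      linear_combination ((2)*τ*s*K*E + θ₀*τ^2*c*K*E + (-1)*σ₀*τ^2*s*K*E)*hA1
        + ((-1)*τ^2*s*K*E)*hA0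
        + ((2)*θ₀^3*τ^3*K)*hpy
        + ((-4)*θ₀*τ*s^2*K + (2)*θ₀^2*τ^2*s*c*K + (2)*θ₀^3*τ^3*c^2*K + (2)*θ₀^3*τ^3*s^2*K)*hEK
    have hz2 : iteratedDeriv 2 Δ ((σ₀:ℂ) + θ₀*Complex.I) ≠ 0 := by
      rw [hb2]
      intro h
      exact quasi_second_ne τ θ₀ K _ _ c s hτ hθ₀ hpy hKpos hM1 hM2 ((quasi_mk_zero _ _).mp h)
    refine ⟨hz0, hz1, hz2, ?_, ?_, ?_⟩
    · rw [hfc, hz0, map_zero]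
    · rw [hf1c, hz1, map_zero]
    · rw [hf2c]
      intro h
      apply hz2
      have h2 := congrArg (starRingEnd ℂ) h
      simpa using h2
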